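/- With R and I as above, the ℤ-linear map φ: R → (ℤ/2)[t]/(t²−1) defined on monomials by φ(sⁿtᵐ) = t^{(n+nm+m) mod 2} is surjective and has kernel exactly I; hence φ induces an additive group isomorphism R/I ≅ (ℤ/2)[t]/(t²−1). -/

import Mathlib

noncomputable section

abbrev R2 : Type := AddMonoidAlgebra ℤ (ℤ × ℤ)

def mono (n m : ℤ) : R2 := AddMonoidAlgebra.single (n, m) 1

def Igen : Set R2 :=
  {x | ∃ n : ℤ, x = mono n n - mono n 0} ∪
  {x | ∃ n m : ℤ, x = mono n m + mono (-n) (m - n)} ∪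
  {x | ∃ n m : ℤ, x = mono n m + mono m n} ∪
  {x | ∃ n m : ℤ, x = mono n m * (1 - mono 0 1) ^ 2}

def I : AddSubgroup R2 := AddSubgroup.closure Igen

abbrev A2 : Type := AddMonoidAlgebra (ZMod 2) (ZMod 2)

def tA (k : ZMod 2) : A2 := AddMonoidAlgebra.single k 1

def Jf (n m : ℤ) : ZMod 2 := ((n + n * m + m : ℤ) : ZMod 2)

def phi : R2 →ₗ[ℤ] A2 :=
  Finsupp.lsum ℤ (fun p : ℤ × ℤ => LinearMap.toSpanSingleton ℤ A2 (tA (Jf p.1 p.2))) ∘ₗ (AddMonoidAlgebra.coeffLinearEquiv ℤ).toLinearMap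

def epsA : A2 →ₐ[ZMod 2] ZMod 2 := (AddMonoidAlgebra.lift (ZMod 2) (ZMod 2) (ZMod 2)) 1

def ev1 : LaurentPolynomial ℤ →ₗ[ℤ] ℤ := Finsupp.lsum ℤ (fun _ => LinearMap.id) ∘ₗ (AddMonoidAlgebra.coeffLinearEquiv ℤ).toLinearMap

def lder : LaurentPolynomial ℤ →ₗ[ℤ] LaurentPolynomial ℤ :=
  Finsupp.lsum ℤ (fun n : ℤ =>
    LinearMap.toSpanSingleton ℤ (LaurentPolynomial ℤ) ((n : ℤ) • LaurentPolynomial.T (n - 1))) ∘ₗ (AddMonoidAlgebra.coeffLinearEquiv ℤ).toLinearMap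

def ev2 : R2 →ₗ[ℤ] ZMod 2 :=
  Finsupp.lsum ℤ (fun _ : ℤ × ℤ => LinearMap.toSpanSingleton ℤ (ZMod 2) 1) ∘ₗ (AddMonoidAlgebra.coeffLinearEquiv ℤ).toLinearMap

lemma phi_mono (n m : ℤ) : phi (mono n m) = tA (Jf n m) := by
  show (Finsupp.lsum ℤ (fun p : ℤ × ℤ => LinearMap.toSpanSingleton ℤ A2 (tA (Jf p.1 p.2))))
      (Finsupp.single (n, m) (1 : ℤ)) = tA (Jf n m)
  rw [Finsupp.lsum_single]
  simp

lemma mono_mul (n m a b : ℤ) : mono n m * mono a b = mono (n+a) (m+b) := by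
  simp [mono, AddMonoidAlgebra.single_mul_single, Prod.mk_add_mk]

lemma g4_expand (n m : ℤ) : mono n m * (1 - mono 0 1)^2
    = mono n m - 2 • mono n (m+1) + mono n (m+2) := by
  rw [sub_sq, mul_one, one_pow, mul_add, mul_sub, mul_one, pow_two, ← mul_assoc]
  rw [mul_comm (mono n m) 2, mul_assoc, mono_mul, mono_mul, mono_mul]
  norm_num

-- Jf relations via decide on ZMod 2
lemma Jf_cast (n m : ℤ) : Jf n m = (n : ZMod 2) + (n : ZMod 2) * (m : ZMod 2) + (m : ZMod 2) := by
  unfold Jf; push_cast; ring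

lemma Jf_diag (n : ℤ) : Jf n n = Jf n 0 := by
  rw [Jf_cast, Jf_cast]; push_cast
  generalize (n : ZMod 2) = a; revert a; decide

lemma Jf_g2 (n m : ℤ) : Jf (-n) (m - n) = Jf n m := by
  rw [Jf_cast, Jf_cast]; push_cast
  generalize (n : ZMod 2) = a; generalize (m : ZMod 2) = b; revert a b; decide

lemma Jf_symm (n m : ℤ) : Jf m n = Jf n m := by
  rw [Jf_cast, Jf_cast]; ring

lemma Jf_shift (n m : ℤ) : Jf n (m + 2) = Jf n m := by
  rw [Jf_cast, Jf_cast]; push_cast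
  generalize (n : ZMod 2) = a; generalize (m : ZMod 2) = b; revert a b; decide

def q : R2 →+ R2 ⧸ I := QuotientAddGroup.mk' I

def qa (n m : ℤ) : R2 ⧸ I := q (mono n m)

lemma mem_I_iff (x : R2) : x ∈ I ↔ q x = 0 := (QuotientAddGroup.eq_zero_iff x).symm

lemma gen_mem {x : R2} (h : x ∈ Igen) : q x = 0 :=
  (mem_I_iff x).mp (AddSubgroup.subset_closure h)

lemma r1 (n : ℤ) : qa n n = qa n 0 := by
  have := gen_mem (x := mono n n - mono n 0) (Or.inl (Or.inl (Or.inl ⟨n, rfl⟩)))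
  rw [map_sub] at this
  exact sub_eq_zero.mp this

lemma r2 (n m : ℤ) : qa n m = - qa (-n) (m - n) := by
  have := gen_mem (x := mono n m + mono (-n) (m - n)) (Or.inl (Or.inl (Or.inr ⟨n, m, rfl⟩)))
  rw [map_add] at this
  exact eq_neg_of_add_eq_zero_left this

lemma r3 (n m : ℤ) : qa n m = - qa m n := by
  have := gen_mem (x := mono n m + mono m n) (Or.inl (Or.inr ⟨n, m, rfl⟩))
  rw [map_add] at this
  exact eq_neg_of_add_eq_zero_left this

lemma r4 (n m : ℤ) : qa n m + qa n (m + 2) = 2 • qa n (m + 1) := by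
  have := gen_mem (x := mono n m * (1 - mono 0 1) ^ 2) (Or.inr ⟨n, m, rfl⟩)
  rw [g4_expand, map_add, map_sub, map_nsmul] at this
  rw [sub_add_eq_add_sub, sub_eq_zero] at this
  simpa [qa] using this

lemma tor (n : ℤ) : 2 • qa n 0 = 0 := by
  rw [two_nsmul, ← r1 n]
  nth_rewrite 2 [r3 n n]
  exact add_neg_cancel _

lemma const_diff (n m : ℤ) : qa n (m+1) - qa n m = qa n 1 - qa n 0 := by
  induction m using Int.induction_on with
  | zero => norm_num
  | succ k ih =>
      have h := r4 n k
      rw [two_nsmul] at h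
      have e : (k:ℤ) + 1 + 1 = k + 2 := by ring
      rw [e]
      have h2 : qa n (k+2) - qa n (k+1) = qa n (k+1) - qa n k :=
        sub_eq_sub_iff_add_eq_add.mpr (by rw [add_comm] at h; exact h)
      rw [h2]; exact ih
  | pred k ih =>
      have h := r4 n (-k-1)
      rw [two_nsmul] at h
      have e1 : (-k:ℤ) - 1 + 1 = -k := by ring
      have e2 : (-k:ℤ) - 1 + 2 = -k + 1 := by ring
      rw [e1, e2] at h
      rw [e1]
      have h2 : qa n (-k) - qa n (-k-1) = qa n (-k+1) - qa n (-k) :=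
        sub_eq_sub_iff_add_eq_add.mpr (by rw [add_comm] at h; exact h.symm)
      rw [h2]
      simpa using ih

lemma lin (n m : ℤ) : qa n m = qa n 0 + m • (qa n 1 - qa n 0) := by
  induction m using Int.induction_on with
  | zero => simp
  | succ k ih =>
      have h := const_diff n k
      have : qa n (k+1) = (qa n 1 - qa n 0) + qa n k := by
        rw [← h]; abel
      rw [this, ih, add_zsmul, one_zsmul]; abel
  | pred k ih =>
      have h := const_diff n (-k-1)
      have e1 : (-k:ℤ) - 1 + 1 = -k := by ring
      rw [e1] at h
      have : qa n (-k-1) = qa n (-k) - (qa n 1 - qa n 0) := by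
        rw [← h]; abel
      have hz : (-(k:ℤ) - 1) • (qa n 1 - qa n 0)
          = (-(k:ℤ)) • (qa n 1 - qa n 0) - (qa n 1 - qa n 0) := by
        rw [sub_zsmul, one_zsmul, ← sub_eq_add_neg]
      rw [this, ih, hz]; abel

lemma qa_1n (n : ℤ) : qa 1 n = qa 1 0 := by
  rw [lin 1 n, r1 1]; simp

lemma qa_n1 (n : ℤ) : qa n 1 = - qa 1 0 := by
  rw [r3 n 1, qa_1n]

lemma qa_n0 (n : ℤ) : qa n 0 = (n-1) • qa 0 0 + n • qa 1 0 := by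
  rw [r3 n 0, lin 0 n, qa_n1 0]
  module

lemma formula (n m : ℤ) :
    qa n m = ((1-m)*(n-1)) • qa 0 0 + ((1-m)*n - m) • qa 1 0 := by
  rw [lin n m, qa_n1 n, qa_n0 n]
  module

lemma even_zsmul {M : Type} [AddCommGroup M] {g : M} (h : (2:ℤ) • g = 0)
    {c : ℤ} (hc : Even c) : c • g = 0 := by
  obtain ⟨k, rfl⟩ := hc
  have : (k + k : ℤ) = k * 2 := by ring
  rw [this, mul_smul, h, smul_zero]

lemma odd_zsmul {M : Type} [AddCommGroup M] {g : M} (h : (2:ℤ) • g = 0)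
    {c : ℤ} (hc : Odd c) : c • g = g := by
  obtain ⟨k, rfl⟩ := hc
  have : (2 * k + 1 : ℤ) = k * 2 + 1 := by ring
  rw [this, add_zsmul, mul_smul, h, smul_zero, one_zsmul, zero_add]

lemma tor' (n : ℤ) : (2:ℤ) • qa n 0 = 0 := by
  have := tor n
  rw [show ((2:ℤ) • qa n 0) = (2:ℕ) • qa n 0 from rfl]
  exact this

lemma qa_eq (n m : ℤ) : qa n m = (if Jf n m = 0 then qa 0 0 else qa 1 0) := by
  have hu := tor' 0
  have hv := tor' 1
  have hc1 : (1-m)*(n-1) = (n + n*m + m) - 2*(n*m) - 1 := by ring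
  have hc2 : (1-m)*n - m = (n + n*m + m) - 2*(n*m) - 2*m := by ring
  rcases Int.even_or_odd (n + n*m + m) with he | ho
  · have hJ : Jf n m = 0 := by
      unfold Jf
      rw [ZMod.intCast_zmod_eq_zero_iff_dvd]
      exact_mod_cast he.two_dvd
    obtain ⟨k, hk⟩ := he
    rw [if_pos hJ, formula]
    rw [even_zsmul hv ⟨k - n*m - m, by rw [hc2, hk]; ring⟩,
        odd_zsmul hu ⟨k - n*m - 1, by rw [hc1, hk]; ring⟩, add_zero]
  · have hJ : Jf n m ≠ 0 := by
      unfold Jf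
      intro hdvd
      rw [ZMod.intCast_zmod_eq_zero_iff_dvd] at hdvd
      obtain ⟨k, hk⟩ := ho
      obtain ⟨j, hj⟩ := hdvd
      rw [hk] at hj
      push_cast at hj
      omega
    obtain ⟨k, hk⟩ := ho
    rw [if_neg hJ, formula]
    rw [even_zsmul hu ⟨k - n*m, by rw [hc1, hk]; ring⟩,
        odd_zsmul hv ⟨k - n*m - m, by rw [hc2, hk]; ring⟩, zero_add]

def gq : ZMod 2 → R2 ⧸ I := fun k => if k = 0 then qa 0 0 else qa 1 0

lemma gq_tor (k : ZMod 2) : (2:ℤ) • gq k = 0 := by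
  unfold gq; split
  · exact tor' 0
  · exact tor' 1

def chi (k : ZMod 2) : ZMod 2 →+ R2 ⧸ I :=
  ZMod.lift 2 ⟨zmultiplesHom _ (gq k), by simpa using gq_tor k⟩

lemma chi_one (k : ZMod 2) : chi k 1 = gq k := by
  have h : ((1:ℤ) : ZMod 2) = 1 := by norm_num
  rw [← h, chi, ZMod.lift_coe]
  simp

def psi : A2 →+ R2 ⧸ I := (Finsupp.liftAddHom chi).comp AddMonoidAlgebra.coeffAddEquiv.toAddMonoidHom

lemma psi_tA (k : ZMod 2) : psi (tA k) = gq k := by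
  show (Finsupp.liftAddHom chi) (Finsupp.single k (1 : ZMod 2)) = gq k
  rw [Finsupp.liftAddHom_apply_single]
  exact chi_one k

lemma qa_eq' (n m : ℤ) : qa n m = gq (Jf n m) := qa_eq n m

lemma psi_phi (x : R2) : psi (phi x) = q x := by
  induction x using AddMonoidAlgebra.induction_linear with
  | zero => simp
  | add f g hf hg => rw [map_add, map_add, map_add, hf, hg]
  | single a b =>
      have h : (AddMonoidAlgebra.single a b : R2) = b • mono a.1 a.2 := by
        rw [mono]
        show _ = b • AddMonoidAlgebra.single ((a.1, a.2) : ℤ × ℤ) (1:ℤ)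
        rw [AddMonoidAlgebra.smul_single, smul_eq_mul, mul_one]
      rw [h, map_zsmul, map_zsmul, map_zsmul, phi_mono, psi_tA, ← qa_eq']
      rfl

lemma tA2 (k : ZMod 2) : tA k + tA k = 0 := by
  show AddMonoidAlgebra.single k (1:ZMod 2) + AddMonoidAlgebra.single k 1 = 0
  erw [← AddMonoidAlgebra.single_add]
  have : (1 + 1 : ZMod 2) = 0 := by decide
  rw [this, AddMonoidAlgebra.single_zero]

lemma phi_gen {x : R2} (h : x ∈ Igen) : phi x = 0 := by
  rcases h with ((⟨n, rfl⟩ | ⟨n, m, rfl⟩) | ⟨n, m, rfl⟩) | ⟨n, m, rfl⟩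
  · rw [map_sub, phi_mono, phi_mono, Jf_diag, sub_self]
  · rw [map_add, phi_mono, phi_mono, Jf_g2, tA2]
  · rw [map_add, phi_mono, phi_mono, Jf_symm, tA2]
  · rw [g4_expand, map_add, map_sub, map_nsmul, phi_mono, phi_mono, phi_mono, Jf_shift,
      two_nsmul, tA2, sub_zero, tA2]

lemma I_le_ker {x : R2} (hx : x ∈ I) : phi x = 0 := by
  have : I ≤ AddMonoidHom.ker phi.toAddMonoidHom := by
    rw [I, AddSubgroup.closure_le]
    intro y hy
    exact AddMonoidHom.mem_ker.mpr (phi_gen hy)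
  exact AddMonoidHom.mem_ker.mp (this hx)

lemma phi_surj : Function.Surjective phi := by
  intro y
  refine ⟨((y.coeff 0).val : ℤ) • mono 0 0 + ((y.coeff 1).val : ℤ) • mono 1 0, ?_⟩
  rw [map_add, map_zsmul, map_zsmul, phi_mono, phi_mono]
  have j00 : Jf 0 0 = 0 := by unfold Jf; norm_num
  have j10 : Jf 1 0 = 1 := by unfold Jf; norm_num
  rw [j00, j10]
  have hs : ∀ (k : ZMod 2) (c : ZMod 2), ((c.val : ℤ) • tA k) = AddMonoidAlgebra.single k c := by
    intro k c
    show (c.val : ℤ) • AddMonoidAlgebra.single k (1 : ZMod 2) = _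
    rw [AddMonoidAlgebra.smul_single]
    congr 1
    rw [zsmul_one]
    push_cast
    exact ZMod.natCast_rightInverse c
  rw [hs, hs]
  ext a
  have ha : a = 0 ∨ a = 1 := by revert a; decide
  have h01 : (0 : ZMod 2) ≠ 1 := by decide
  rcases ha with rfl | rfl
  · rw [AddMonoidAlgebra.coeff_add, AddMonoidAlgebra.coeff_single, AddMonoidAlgebra.coeff_single]
    erw [Finsupp.add_apply]
    rw [Finsupp.single_apply, Finsupp.single_apply, if_pos rfl, if_neg h01.symm, add_zero]
  · rw [AddMonoidAlgebra.coeff_add, AddMonoidAlgebra.coeff_single, AddMonoidAlgebra.coeff_single]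
    erw [Finsupp.add_apply]
    rw [Finsupp.single_apply, Finsupp.single_apply, if_neg h01, if_pos rfl, zero_add]

lemma phi_ker_iff (x : R2) : phi x = 0 ↔ x ∈ I := by
  constructor
  · intro h
    have : q x = 0 := by rw [← psi_phi, h, map_zero]
    exact (mem_I_iff x).mpr this
  · exact I_le_ker

theorem stmt17 : Function.Surjective phi ∧ (∀ x : R2, phi x = 0 ↔ x ∈ I) ∧
    Nonempty ((R2 ⧸ I) ≃+ A2) := by
  refine ⟨phi_surj, phi_ker_iff, ?_⟩
  have hker : I = AddMonoidHom.ker phi.toAddMonoidHom := by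
    ext x
    rw [AddMonoidHom.mem_ker]
    exact (phi_ker_iff x).symm
  exact ⟨(QuotientAddGroup.quotientAddEquivOfEq hker).trans
    (QuotientAddGroup.quotientKerEquivOfSurjective phi.toAddMonoidHom phi_surj)⟩
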